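/- Theorem 1 (Asymmetric IL target): The implicit policy minimizes the asymmetric imitation learning objective: for every belief-conditional policy π : B → pmf(A), ∑_{(s,b)∈S×B} d(s,b)·KL(π_θ(·|s) ‖ π̂(·|b)) ≤ ∑_{(s,b)∈S×B} d(s,b)·KL(π_θ(·|s) ‖ π(·|b)), the inequality holding in [0,+∞]; moreover the left-hand side is finite. -/

import Mathlib

open scoped BigOperators ENNReal Classical

noncomputable section

/-- A probability mass function on a finite type. -/
def IsPmf {X : Type*} [Fintype X] (p : X → ℝ) : Prop :=
  (∀ x, 0 ≤ p x) ∧ ∑ x, p x = 1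

/-- Kullback–Leibler divergence between two pmfs on a finite type, valued in `[0, ∞]`,
with the conventions `0 * log (0 / q a) = 0` and `KL(p‖q) = ∞` whenever
`p a > 0 = q a` for some `a`. -/
def klDiv {A : Type*} [Fintype A] (p q : A → ℝ) : ℝ≥0∞ :=
  if ∀ a, q a = 0 → p a = 0 then ENNReal.ofReal (∑ a, p a * Real.log (p a / q a)) else ⊤

/-- Gibbs' inequality: the real Kullback–Leibler sum is nonnegative. -/
lemma gibbs {A : Type*} [Fintype A] (p q : A → ℝ)
    (hp : ∀ a, 0 ≤ p a) (hq : ∀ a, 0 ≤ q a)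
    (hps : ∑ a, p a = 1) (hqs : ∑ a, q a ≤ 1)
    (habs : ∀ a, q a = 0 → p a = 0) :
    0 ≤ ∑ a, p a * Real.log (p a / q a) := by
  have key : ∀ a, p a - (if 0 < p a then q a else 0) ≤ p a * Real.log (p a / q a) := by
    intro a
    by_cases hpa : 0 < p a
    · have hqa : 0 < q a := by
        rcases (hq a).lt_or_eq with h | h
        · exact h
        · exact absurd (habs a h.symm) (by positivity)
      simp only [if_pos hpa]
      have hlog : Real.log (q a / p a) ≤ q a / p a - 1 :=
        Real.log_le_sub_one_of_pos (div_pos hqa hpa)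
      have hrw : Real.log (q a / p a) = - Real.log (p a / q a) := by
        rw [Real.log_div hqa.ne' hpa.ne', Real.log_div hpa.ne' hqa.ne']; ring
      rw [hrw] at hlog
      have h2 : p a * (q a / p a) = q a := by field_simp
      nlinarith [mul_le_mul_of_nonneg_left hlog (hp a)]
    · have h0 : p a = 0 := le_antisymm (not_lt.mp hpa) (hp a)
      simp [h0]
  have hsum : ∑ a, (p a - (if 0 < p a then q a else 0)) ≤ ∑ a, p a * Real.log (p a / q a) :=
    Finset.sum_le_sum (fun a _ => key a)
  rw [Finset.sum_sub_distrib, hps] at hsum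
  have hr : ∑ a, (if 0 < p a then q a else 0) ≤ ∑ a, q a :=
    Finset.sum_le_sum (fun a _ => by split <;> simp [hq a])
  linarith

/-- Theorem 1 (Asymmetric IL target): the implicit policy minimizes the asymmetric
imitation learning objective, and at the implicit policy the objective is finite. -/
theorem asymmetric_il_target
    {S B A : Type*} [Fintype S] [Fintype B] [Fintype A]
    [Nonempty S] [Nonempty B] [Nonempty A]
    (d : S × B → ℝ) (hd : IsPmf d)
    (πθ : S → A → ℝ) (hπθ : ∀ s, IsPmf (πθ s))
    (dB : B → ℝ) (hdB : ∀ b, dB b = ∑ s, d (s, b))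
    (πhat : B → A → ℝ)
    (hπhat_pos : ∀ b, 0 < dB b → ∀ a, πhat b a = ∑ s, d (s, b) / dB b * πθ s a)
    (hπhat_zero : ∀ b, dB b = 0 → ∀ a, πhat b a = 1 / (Fintype.card A : ℝ)) :
    (∑ x : S × B, ENNReal.ofReal (d x) * klDiv (πθ x.1) (πhat x.2)) ≠ ⊤ ∧
    ∀ π : B → A → ℝ, (∀ b, IsPmf (π b)) →
      (∑ x : S × B, ENNReal.ofReal (d x) * klDiv (πθ x.1) (πhat x.2))
        ≤ ∑ x : S × B, ENNReal.ofReal (d x) * klDiv (πθ x.1) (π x.2) := by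
  obtain ⟨hd0, hd1⟩ := hd
  -- basic facts
  have hdle : ∀ s b, d (s, b) ≤ dB b := by
    intro s b
    rw [hdB b]
    exact Finset.single_le_sum (f := fun s => d (s, b)) (fun s _ => hd0 _) (Finset.mem_univ s)
  have hdB0 : ∀ b, 0 ≤ dB b := by
    intro b; rw [hdB b]; exact Finset.sum_nonneg fun s _ => hd0 _
  have hdzero : ∀ b, dB b = 0 → ∀ s, d (s, b) = 0 := by
    intro b hb s
    have := (Finset.sum_eq_zero_iff_of_nonneg (fun s _ => hd0 (s, b))).mp ((hdB b).symm.trans hb)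
    exact this s (Finset.mem_univ s)
  -- absolute continuity of πθ s w.r.t. πhat b when d (s,b) > 0
  have habs_hat : ∀ s b, 0 < d (s, b) → ∀ a, πhat b a = 0 → πθ s a = 0 := by
    intro s b hpos a h0
    have hdBpos : 0 < dB b := lt_of_lt_of_le hpos (hdle s b)
    rw [hπhat_pos b hdBpos a] at h0
    have hterm := (Finset.sum_eq_zero_iff_of_nonneg (fun s' _ =>
      mul_nonneg (div_nonneg (hd0 _) (hdB0 b)) ((hπθ s').1 a))).mp h0 s (Finset.mem_univ s)
    have : 0 < d (s, b) / dB b := div_pos hpos hdBpos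
    exact (mul_eq_zero.mp hterm).resolve_left this.ne'
  -- πhat b a > 0 when d (s,b) > 0 and πθ s a > 0
  have hhat_pos : ∀ s b, 0 < d (s, b) → ∀ a, 0 < πθ s a → 0 < πhat b a := by
    intro s b hpos a hpa
    have hdBpos : 0 < dB b := lt_of_lt_of_le hpos (hdle s b)
    rw [hπhat_pos b hdBpos a]
    have h1 : d (s, b) / dB b * πθ s a ≤ ∑ s', d (s', b) / dB b * πθ s' a :=
      Finset.single_le_sum (f := fun s' => d (s', b) / dB b * πθ s' a)
        (fun s' _ => mul_nonneg (div_nonneg (hd0 _) (hdB0 b)) ((hπθ s').1 a))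
        (Finset.mem_univ s)
    exact lt_of_lt_of_le (mul_pos (div_pos hpos hdBpos) hpa) h1
  -- πhat b is a pmf when dB b > 0
  have hhat_nn : ∀ b, 0 < dB b → ∀ a, 0 ≤ πhat b a := by
    intro b hb a
    rw [hπhat_pos b hb a]
    exact Finset.sum_nonneg fun s _ => mul_nonneg (div_nonneg (hd0 _) (hdB0 b)) ((hπθ s).1 a)
  have hhat_sum : ∀ b, 0 < dB b → ∑ a, πhat b a = 1 := by
    intro b hb
    have : ∑ a, πhat b a = ∑ a, ∑ s, d (s, b) / dB b * πθ s a := by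
      exact Finset.sum_congr rfl fun a _ => hπhat_pos b hb a
    rw [this, Finset.sum_comm]
    have : ∀ s, ∑ a, d (s, b) / dB b * πθ s a = d (s, b) / dB b := by
      intro s; rw [← Finset.mul_sum, (hπθ s).2, mul_one]
    rw [Finset.sum_congr rfl fun s _ => this s, ← Finset.sum_div, ← hdB b,
      div_self hb.ne']
  -- marginal identity
  have hmarg : ∀ b, 0 < dB b → ∀ a, ∑ s, d (s, b) * πθ s a = dB b * πhat b a := by
    intro b hb a
    rw [hπhat_pos b hb a, Finset.mul_sum]
    refine Finset.sum_congr rfl fun s _ => ?_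
    field_simp
  -- real KL
  set kl : (A → ℝ) → (A → ℝ) → ℝ := fun p q => ∑ a, p a * Real.log (p a / q a) with hkl
  -- term rewriting
  have hterm : ∀ (q : B → A → ℝ), (∀ s b, 0 < d (s, b) → ∀ a, q b a = 0 → πθ s a = 0) →
      ∀ x : S × B, ENNReal.ofReal (d x) * klDiv (πθ x.1) (q x.2)
        = ENNReal.ofReal (d x * kl (πθ x.1) (q x.2)) := by
    rintro q habs ⟨s, b⟩
    rcases (hd0 (s, b)).eq_or_lt with h | h
    · simp [← h]
    · simp only [klDiv]
      rw [if_pos (habs s b h)]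
      rw [← ENNReal.ofReal_mul (hd0 _)]
  have hLnn : ∀ x : S × B, 0 ≤ d x * kl (πθ x.1) (πhat x.2) := by
    rintro ⟨s, b⟩
    rcases (hd0 (s, b)).eq_or_lt with h | h
    · simp [← h]
    · refine mul_nonneg (hd0 _) ?_
      have hdBpos : 0 < dB b := lt_of_lt_of_le h (hdle s b)
      exact gibbs _ _ (hπθ s).1 (hhat_nn b hdBpos) (hπθ s).2
        (le_of_eq (hhat_sum b hdBpos)) (habs_hat s b h)
  have hLHS : (∑ x : S × B, ENNReal.ofReal (d x) * klDiv (πθ x.1) (πhat x.2))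
      = ENNReal.ofReal (∑ x : S × B, d x * kl (πθ x.1) (πhat x.2)) := by
    rw [ENNReal.ofReal_sum_of_nonneg (fun x _ => hLnn x)]
    exact Finset.sum_congr rfl fun x _ => hterm πhat habs_hat x
  constructor
  · rw [hLHS]; exact ENNReal.ofReal_ne_top
  intro π hπ
  by_cases hR : (∑ x : S × B, ENNReal.ofReal (d x) * klDiv (πθ x.1) (π x.2)) = ⊤
  · rw [hR]; exact le_top
  -- absolute continuity for π from finiteness of RHS
  have habs_π : ∀ s b, 0 < d (s, b) → ∀ a, π b a = 0 → πθ s a = 0 := by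
    intro s b hpos a h0
    by_contra hne
    apply hR
    have hkltop : klDiv (πθ s) (π b) = ⊤ := by
      simp only [klDiv]
      rw [if_neg]
      push_neg
      exact ⟨a, h0, hne⟩
    have htop : ENNReal.ofReal (d (s, b)) * klDiv (πθ s) (π b) = ⊤ := by
      rw [hkltop]
      exact ENNReal.mul_top (by simp [ENNReal.ofReal_eq_zero, not_le, hpos])
    refine top_le_iff.mp ?_
    calc (⊤ : ℝ≥0∞) = ENNReal.ofReal (d ((s, b) : S × B))
          * klDiv (πθ (s, b).1) (π (s, b).2) := htop.symm
      _ ≤ _ := Finset.single_le_sum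
          (f := fun x : S × B => ENNReal.ofReal (d x) * klDiv (πθ x.1) (π x.2))
          (fun x _ => zero_le) (Finset.mem_univ ((s, b) : S × B))
  have hRnn : ∀ x : S × B, 0 ≤ d x * kl (πθ x.1) (π x.2) := by
    rintro ⟨s, b⟩
    rcases (hd0 (s, b)).eq_or_lt with h | h
    · simp [← h]
    · exact mul_nonneg (hd0 _) (gibbs _ _ (hπθ s).1 (hπ b).1 (hπθ s).2
        (le_of_eq (hπ b).2) (habs_π s b h))
  have hRHS : (∑ x : S × B, ENNReal.ofReal (d x) * klDiv (πθ x.1) (π x.2))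
      = ENNReal.ofReal (∑ x : S × B, d x * kl (πθ x.1) (π x.2)) := by
    rw [ENNReal.ofReal_sum_of_nonneg (fun x _ => hRnn x)]
    exact Finset.sum_congr rfl fun x _ => hterm π habs_π x
  rw [hLHS, hRHS]
  apply ENNReal.ofReal_le_ofReal
  rw [← sub_nonneg, ← Finset.sum_sub_distrib]
  -- pointwise rewriting of the difference
  have hdiff : ∀ x : S × B, d x * kl (πθ x.1) (π x.2) - d x * kl (πθ x.1) (πhat x.2)
      = d x * ∑ a, πθ x.1 a * Real.log (πhat x.2 a / π x.2 a) := by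
    rintro ⟨s, b⟩
    rcases (hd0 (s, b)).eq_or_lt with h | h
    · simp [← h]
    · rw [← mul_sub, hkl]
      simp only
      rw [← Finset.sum_sub_distrib]
      congr 1
      refine Finset.sum_congr rfl fun a _ => ?_
      rcases ((hπθ s).1 a).eq_or_lt with hpa | hpa
      · simp [← hpa]
      · have hπa : 0 < π b a := by
          rcases ((hπ b).1 a).lt_or_eq with h' | h'
          · exact h'
          · exact absurd (habs_π s b h a h'.symm) hpa.ne'
        have hhata : 0 < πhat b a := hhat_pos s b h a hpa
        rw [← mul_sub, Real.log_div hpa.ne' hπa.ne', Real.log_div hpa.ne' hhata.ne',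
          Real.log_div hhata.ne' hπa.ne']
        ring
  rw [Finset.sum_congr rfl fun x _ => hdiff x]
  -- regroup over b
  have hregroup : (∑ x : S × B, d x * ∑ a, πθ x.1 a * Real.log (πhat x.2 a / π x.2 a))
      = ∑ b, ∑ a, (∑ s, d (s, b) * πθ s a) * Real.log (πhat b a / π b a) := by
    rw [Fintype.sum_prod_type, Finset.sum_comm]
    refine Finset.sum_congr rfl fun b _ => ?_
    simp only [Finset.mul_sum]
    rw [Finset.sum_comm]
    refine Finset.sum_congr rfl fun a _ => ?_
    rw [Finset.sum_mul]
    refine Finset.sum_congr rfl fun s _ => ?_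
    ring
  rw [hregroup]
  refine Finset.sum_nonneg fun b _ => ?_
  rcases (hdB0 b).eq_or_lt with hb | hb
  · refine Finset.sum_nonneg fun a _ => ?_
    have : ∑ s, d (s, b) * πθ s a = 0 :=
      Finset.sum_eq_zero fun s _ => by rw [hdzero b hb.symm s, zero_mul]
    rw [this, zero_mul]
  · have : ∀ a, (∑ s, d (s, b) * πθ s a) * Real.log (πhat b a / π b a)
        = dB b * (πhat b a * Real.log (πhat b a / π b a)) := by
      intro a; rw [hmarg b hb a]; ring
    rw [Finset.sum_congr rfl fun a _ => this a, ← Finset.mul_sum]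
    refine mul_nonneg (hdB0 b) ?_
    -- Gibbs for (πhat b, π b): need πhat ≪ π b
    refine gibbs _ _ (hhat_nn b hb) (hπ b).1 (hhat_sum b hb) (le_of_eq (hπ b).2) ?_
    intro a h0
    rw [hπhat_pos b hb a]
    refine Finset.sum_eq_zero fun s _ => ?_
    rcases (hd0 (s, b)).eq_or_lt with h | h
    · rw [← h, zero_div, zero_mul]
    · rw [habs_π s b h a h0, mul_zero]
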